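/- For real numbers a, c with 1 + c ≠ 0, the three conditions (i) 1 + c·e^{2iθ} ≠ 0 for all θ ∈ [0,2π]; (ii) 2a/(1+c) > 0; (iii) iy(1 + c·e^{2iθ}) + a + a·e^{iθ} ≠ 0 for all θ ∈ [0,2π] and all nonzero real y, hold simultaneously if and only if a > 0 and −1 < c ≤ 1/3. -/

import Mathlib

open Complex Real

lemma witness (a c t : ℝ) (hc : 1 + c ≠ 0) (ha : a ≠ 0) (ht : 2*c*t = c - 1)
    (ht1 : -1 < t) (ht2 : t < 1) (ht0 : t ≠ 0) :
    ∃ θ ∈ Set.Icc (0:ℝ) (2*π), ∃ y : ℝ, y ≠ 0 ∧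
      (y : ℂ) * I * (1 + (c : ℂ) * Complex.exp (2 * θ * I)) + (a : ℂ) +
        (a : ℂ) * Complex.exp (θ * I) = 0 := by
  have hs : 0 < Real.sin (Real.arccos t) := by
    rw [Real.sin_arccos]
    exact Real.sqrt_pos.2 (by nlinarith)
  refine ⟨Real.arccos t, ⟨Real.arccos_nonneg t, le_trans (Real.arccos_le_pi t)
    (by nlinarith [Real.pi_pos])⟩, a * Real.sin (Real.arccos t) / ((1+c)*t), ?_, ?_⟩
  · exact div_ne_zero (mul_ne_zero ha hs.ne') (mul_ne_zero hc ht0)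
  · set θ := Real.arccos t with hθ
    have hct : Real.cos θ = t := Real.cos_arccos ht1.le ht2.le
    set s := Real.sin θ with hs'
    have hs2 : s^2 = 1 - t^2 := by
      have := Real.sin_sq_add_cos_sq θ; rw [hct] at this; linarith
    rw [show ((2:ℂ) * θ * I) = ((2*θ:ℝ):ℂ) * I by push_cast; ring,
      Complex.exp_mul_I, Complex.exp_mul_I]
    simp only [Complex.ext_iff, ← Complex.ofReal_cos, ← Complex.ofReal_sin]
    rw [Real.cos_two_mul, Real.sin_two_mul, hct]
    constructor
    · simp only [Complex.add_re, Complex.mul_re, Complex.mul_im, Complex.add_im,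
        Complex.ofReal_re, Complex.ofReal_im, Complex.I_re, Complex.I_im, Complex.one_re,
        Complex.one_im, Complex.zero_re]
      field_simp
      linear_combination (-2*a*c*t)*hs2 + a*t*(1+t)*ht
    · simp only [Complex.add_re, Complex.mul_re, Complex.mul_im, Complex.add_im,
        Complex.ofReal_re, Complex.ofReal_im, Complex.I_re, Complex.I_im, Complex.one_re,
        Complex.one_im, Complex.zero_im]
      field_simp
      linear_combination a*s*(1+t)*ht

/-- For real `a, c` with `1+c ≠ 0`, the three conditions characterizing
delay-independent stability of `ẋ(t)+c·ẋ(t-2τ)+a·x(t)+a·x(t-τ)=0` hold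
simultaneously iff `a > 0` and `-1 < c ≤ 1/3`. -/
theorem scalar_neutral_two_delay_stable (a c : ℝ) (hc : 1 + c ≠ 0) :
    ((∀ θ ∈ Set.Icc (0 : ℝ) (2 * π), 1 + (c : ℂ) * Complex.exp (2 * θ * I) ≠ 0) ∧
      2 * a / (1 + c) > 0 ∧
      (∀ θ ∈ Set.Icc (0 : ℝ) (2 * π), ∀ y : ℝ, y ≠ 0 →
        (y : ℂ) * I * (1 + (c : ℂ) * Complex.exp (2 * θ * I)) + (a : ℂ) +
          (a : ℂ) * Complex.exp (θ * I) ≠ 0)) ↔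
    (a > 0 ∧ -1 < c ∧ c ≤ 1 / 3) := by
  constructor
  · rintro ⟨h1, h2, h3⟩
    have ha : a ≠ 0 := by
      rintro rfl
      simp at h2
    have hcne1 : c ≠ 1 := by
      rintro rfl
      refine h1 (π/2) ⟨by positivity, by nlinarith [Real.pi_pos]⟩ ?_
      rw [show ((2:ℂ) * ↑(π/2) * I) = (π:ℂ) * I by push_cast; ring, Complex.exp_pi_mul_I]
      push_cast; ring
    have hgt : -1 < c := by
      by_contra hk
      push_neg at hk
      have hklt : c < -1 := lt_of_le_of_ne hk (by intro h; exact hc (by rw [h]; ring))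
      have h2c : 2*c < 0 := by linarith
      set t := (c-1)/(2*c) with htdef
      have ht : 2*c*t = c - 1 := by rw [htdef]; field_simp [ne_of_gt h2c, ne_of_lt h2c, (by linarith : c < 0).ne]; try ring
      have ht1 : -1 < t := by rw [lt_div_iff_of_neg h2c]; linarith
      have ht2 : t < 1 := by rw [div_lt_iff_of_neg h2c]; linarith
      have ht0 : t ≠ 0 := div_ne_zero (by intro h; exact hcne1 (by linarith [sub_eq_zero.mp h])) (by linarith)
      obtain ⟨θ, hθ, y, hy, heq⟩ := witness a c t hc ha ht ht1 ht2 ht0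
      exact h3 θ hθ y hy heq
    have hle : c ≤ 1/3 := by
      by_contra hk
      push_neg at hk
      have h2c : 0 < 2*c := by linarith
      set t := (c-1)/(2*c) with htdef
      have ht : 2*c*t = c - 1 := by rw [htdef]; field_simp [ne_of_gt h2c, ne_of_lt h2c]; try ring
      have ht1 : -1 < t := by rw [lt_div_iff₀ h2c]; linarith
      have ht2 : t < 1 := by rw [div_lt_iff₀ h2c]; linarith
      have ht0 : t ≠ 0 := div_ne_zero (sub_ne_zero.2 hcne1) (by linarith)
      obtain ⟨θ, hθ, y, hy, heq⟩ := witness a c t hc ha ht ht1 ht2 ht0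
      exact h3 θ hθ y hy heq
    refine ⟨?_, hgt, hle⟩
    rcases div_pos_iff.mp h2 with ⟨h, _⟩ | ⟨_, h⟩
    · linarith
    · linarith
  · rintro ⟨ha, hc1, hc3⟩
    refine ⟨?_, ?_, ?_⟩
    · intro θ hθ hzero
      have hx : (c:ℂ) * Complex.exp (2*θ*I) = -1 := by linear_combination hzero
      have habs := congrArg (‖·‖) hx
      rw [norm_mul, show ((2:ℂ) * θ * I) = ((2*θ:ℝ):ℂ) * I by push_cast; ring,
        Complex.norm_exp_ofReal_mul_I, Complex.norm_real, Real.norm_eq_abs, norm_neg, norm_one,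
        mul_one] at habs
      have : |c| < 1 := abs_lt.2 ⟨by linarith, by linarith⟩
      linarith
    · exact div_pos (by linarith) (by linarith)
    · intro θ hθ y hy h
      rw [show ((2:ℂ) * θ * I) = ((2*θ:ℝ):ℂ) * I by push_cast; ring,
        Complex.exp_mul_I, Complex.exp_mul_I] at h
      simp [Complex.ext_iff] at h
      obtain ⟨e1, e2⟩ := h
      rw [show (2*(θ:ℂ)) = ((2*θ:ℝ):ℂ) by push_cast; ring] at e1 e2
      simp only [Complex.cos_ofReal_re, Complex.cos_ofReal_im, Complex.sin_ofReal_re,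
        Complex.sin_ofReal_im] at e1 e2
      rw [Real.sin_two_mul] at e1
      rw [Real.cos_two_mul] at e2
      have pyth := Real.sin_sq_add_cos_sq θ
      have hkey : y * (1 + Real.cos θ) * (1 - c + 2*c*Real.cos θ) = 0 := by
        linear_combination (1 + Real.cos θ) * e2 - (Real.sin θ) * e1
          - (2*y*c*Real.cos θ) * pyth
      have hcos1 : Real.cos θ ≤ 1 := Real.cos_le_one θ
      have hcos2 : -1 ≤ Real.cos θ := Real.neg_one_le_cos θ
      have htm1 : Real.cos θ = -1 := by
        rcases mul_eq_zero.mp hkey with h' | h'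
        · rcases mul_eq_zero.mp h' with h'' | h''
          · exact absurd h'' hy
          · linarith
        · rcases lt_trichotomy c 0 with hcc | hcc | hcc
          · exfalso; nlinarith
          · exfalso; rw [hcc] at h'; linarith
          · nlinarith
      have hsin : Real.sin θ = 0 := by
        have : Real.sin θ ^ 2 = 0 := by rw [htm1] at pyth; nlinarith
        exact pow_eq_zero_iff (by norm_num) |>.mp this
      rw [htm1, hsin] at e2
      have : y * (1 + c) = 0 := by linear_combination e2
      exact hy ((mul_eq_zero.mp this).resolve_right hc)
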